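/- For every integer m ≥ 1, every N ∈ ℕ and all constants c₀, c₁, c₃, λ, γ > 0, there exists B₀ > 0 with the following property: for every design problem (𝒳, ℬ, f, ℓ, (ξ[β])_{β∈ℬ}) as in the context that satisfies condition (2.9) with constant c₀, condition (2.5) with constant λ, and the exponential decay condition Q(β,β̃) ≤ c₁ exp(−|ℓ(β) − ℓ(β̃)|^γ) for all β, β̃ ∈ ℬ, and for every Borel probability measure π on ℬ satisfying π(S) ≥ c₃ μ_ℓ(S)/μ_ℓ(ℬ) for every Borel set S ⊆ ℬ (where μ_ℓ is the Lebesgue–Stieltjes measure of ℓ), if μ_ℓ(ℬ) = ℓ(β_max) − ℓ(β_min) ≥ B₀, then every design ξ* maximizing the Bayesian D-criterion Ψ_st(ξ) = ∫_ℬ log( det M(ξ,β) / det M(ξ[β],β) ) dπ(β) over all designs is supported at more than N points. -/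

import Mathlib

open scoped BigOperators ENNReal

/-- An approximate design: a finitely supported probability measure on `X`,
given by its support points and positive weights summing to one. -/
structure Design (X : Type*) where
  support : Finset X
  w : X → ℝ
  w_pos : ∀ x ∈ support, 0 < w x
  w_zero : ∀ x ∉ support, w x = 0
  sum_one : ∑ x ∈ support, w x = 1

/-- Information matrix `M(ξ,β) = ∑ₖ wₖ f(xₖ,β) f(xₖ,β)ᵀ`. -/
noncomputable def infoMat {X : Type*} {m : ℕ} (f : X → ℝ → Fin m → ℝ)
    (ξ : Design X) (β : ℝ) : Matrix (Fin m) (Fin m) ℝ :=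
  ∑ x ∈ ξ.support, ξ.w x • Matrix.vecMulVec (f x β) (f x β)

/-- `I_m(x₁,…,x_m,β) = det[f(x₁,β) ⋯ f(x_m,β)]²`. -/
noncomputable def detIm {X : Type*} {m : ℕ} (f : X → ℝ → Fin m → ℝ)
    (xs : Fin m → X) (β : ℝ) : ℝ :=
  (Matrix.det (Matrix.of fun i j => f (xs j) β i)) ^ 2

/-- `negLog r` is `−log r` as an extended nonnegative real, with value `∞` for `r ≤ 0`.
For an efficiency ratio `r ∈ [0,1]` this encodes the (possibly infinite) Bayesian loss
`−log r`, so that maximizing `Ψ_st(ξ) = ∫ log r dπ` (value `−∞` allowed) is the same as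
minimizing `∫⁻ negLog r dπ`. -/
noncomputable def negLog (r : ℝ) : ℝ≥0∞ :=
  if r ≤ 0 then ⊤ else ENNReal.ofReal (-Real.log r)

open Matrix Finset Equiv Filter

namespace DOptAux

lemma det_nonneg_of_posSemidef {m : ℕ} {A : Matrix (Fin m) (Fin m) ℝ} (hA : A.PosSemidef) :
    0 ≤ A.det := by
  rw [hA.1.det_eq_prod_eigenvalues]
  have : (0:ℝ) ≤ ∏ i, hA.1.eigenvalues i :=
    Finset.prod_nonneg fun i _ => hA.eigenvalues_nonneg i
  exact_mod_cast this

lemma one_le_det_one_add {m : ℕ} {C : Matrix (Fin m) (Fin m) ℝ} (hC : C.PosSemidef) :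
    1 ≤ (1 + C).det := by
  have hD : ((1 : Matrix (Fin m) (Fin m) ℝ) + C).PosSemidef := Matrix.PosSemidef.one.add hC
  have key : ∀ i, (1:ℝ) ≤ hD.1.eigenvalues i := by
    intro i
    rw [hD.1.eigenvalues_eq]
    set v := ⇑(hD.1.eigenvectorBasis i) with hv
    have hsv : star v = v := by ext j; simp
    have h1 : dotProduct v ((1 + C) *ᵥ v) = dotProduct v v + dotProduct v (C *ᵥ v) := by
      rw [add_mulVec, one_mulVec, dotProduct_add]
    have h2 : (0:ℝ) ≤ dotProduct v (C *ᵥ v) := by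
      have := hC.dotProduct_mulVec_nonneg v; rwa [hsv] at this
    have h3 : dotProduct v v = 1 := by
      have hn := hD.1.eigenvectorBasis.orthonormal.1 i
      have h4 : dotProduct v v = ‖hD.1.eigenvectorBasis i‖ ^ 2 := by
        rw [← real_inner_self_eq_norm_sq]
        rfl
      rw [h4, hn]; norm_num
    simp only [RCLike.re_to_real, hsv, h1, h3, h2, le_add_iff_nonneg_right]
  have h5 : (1:ℝ) ≤ ∏ i, hD.1.eigenvalues i := by
    calc (1:ℝ) = ∏ _i : Fin m, (1:ℝ) := by simp
    _ ≤ ∏ i, hD.1.eigenvalues i :=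
      Finset.prod_le_prod (fun _ _ => zero_le_one) (fun i _ => key i)
  rw [hD.1.det_eq_prod_eigenvalues]
  exact_mod_cast h5

open scoped MatrixOrder in
lemma det_le_det_add_posSemidef {m : ℕ} {A B : Matrix (Fin m) (Fin m) ℝ}
    (hA : A.PosSemidef) (hB : B.PosSemidef) : A.det ≤ (A + B).det := by
  by_cases hdet : A.det = 0
  · rw [hdet]; exact det_nonneg_of_posSemidef (hA.add hB)
  · set S := CFC.sqrt A with hS
    have hSps : S.PosSemidef := (CFC.sqrt_nonneg A).posSemidef
    have hSS : S * S = A := CFC.sqrt_mul_sqrt_self A hA.nonneg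
    have hdS : S.det ≠ 0 := by
      intro h
      apply hdet
      rw [← hSS, det_mul, h, mul_zero]
    have hSunit : IsUnit S.det := Ne.isUnit hdS
    have hSinv : S⁻¹.IsHermitian := hSps.1.inv
    have hC : (S⁻¹ * B * S⁻¹).PosSemidef := by
      have := hB.mul_mul_conjTranspose_same S⁻¹
      rwa [hSinv.eq] at this
    have key : A + B = S * (1 + S⁻¹ * B * S⁻¹) * S := by
      rw [mul_add, add_mul, mul_one, hSS]
      congr 1
      symm
      calc S * (S⁻¹ * B * S⁻¹) * S = (S * S⁻¹) * B * (S⁻¹ * S) := by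
            simp only [Matrix.mul_assoc]
      _ = B := by rw [mul_nonsing_inv _ hSunit, nonsing_inv_mul _ hSunit, one_mul, mul_one]
    rw [key, det_mul, det_mul]
    have h1 : 1 ≤ (1 + S⁻¹ * B * S⁻¹).det := one_le_det_one_add hC
    have h2 : 0 ≤ S.det * S.det := by rw [← det_mul, hSS]; exact det_nonneg_of_posSemidef hA
    calc A.det = S.det * 1 * S.det := by rw [mul_one, ← det_mul, hSS]
    _ ≤ S.det * (1 + S⁻¹ * B * S⁻¹).det * S.det := by nlinarith

lemma det_sum_vecMulVec_eq {X : Type*} [DecidableEq X] {m : ℕ} (s : Finset X) (w : X → ℝ)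
    (v : X → Fin m → ℝ) :
    (m.factorial : ℝ) * (∑ x ∈ s, w x • vecMulVec (v x) (v x)).det
    = ∑ φ ∈ Fintype.piFinset (fun _ : Fin m => s),
        (∏ j, w (φ j)) * (Matrix.det (Matrix.of fun i j => v (φ j) i)) ^ 2 := by
  classical
  set sgn : Perm (Fin m) → ℝ := fun σ => ((Equiv.Perm.sign σ : ℤ) : ℝ) with hsgn
  set M : Matrix (Fin m) (Fin m) ℝ := ∑ x ∈ s, w x • vecMulVec (v x) (v x) with hM
  have hMab : ∀ a b, M a b = ∑ x ∈ s, w x * (v x a * v x b) := by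
    intro a b
    simp [hM, Matrix.sum_apply, Matrix.smul_apply, vecMulVec_apply, smul_eq_mul, mul_assoc]
  have hdet : ∀ φ : Fin m → X,
      Matrix.det (Matrix.of fun i j => v (φ j) i)
        = ∑ σ : Perm (Fin m), sgn σ * ∏ i, v (φ i) (σ i) := by
    intro φ
    rw [Matrix.det_apply']
    rfl
  have expand : ∀ φ : Fin m → X,
      (∏ j, w (φ j)) * (Matrix.det (Matrix.of fun i j => v (φ j) i)) ^ 2
      = ∑ σ : Perm (Fin m), ∑ τ : Perm (Fin m), sgn σ * sgn τ *
          ∏ i, (w (φ i) * (v (φ i) (σ i) * v (φ i) (τ i))) := by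
    intro φ
    rw [hdet, sq, Finset.sum_mul_sum, Finset.mul_sum]
    refine Finset.sum_congr rfl fun σ _ => ?_
    rw [Finset.mul_sum]
    refine Finset.sum_congr rfl fun τ _ => ?_
    simp only [Finset.prod_mul_distrib]
    ring
  have step1 : ∑ φ ∈ Fintype.piFinset (fun _ : Fin m => s),
        (∏ j, w (φ j)) * (Matrix.det (Matrix.of fun i j => v (φ j) i)) ^ 2
      = ∑ σ : Perm (Fin m), ∑ τ : Perm (Fin m), sgn σ * sgn τ * ∏ i, M (σ i) (τ i) := by
    rw [Finset.sum_congr rfl fun φ _ => expand φ]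
    rw [Finset.sum_comm]
    refine Finset.sum_congr rfl fun σ _ => ?_
    rw [Finset.sum_comm]
    refine Finset.sum_congr rfl fun τ _ => ?_
    rw [← Finset.mul_sum]
    congr 1
    have hR : ∏ i, M (σ i) (τ i)
        = ∑ φ ∈ Fintype.piFinset (fun _ : Fin m => s),
            ∏ i, w (φ i) * (v (φ i) (σ i) * v (φ i) (τ i)) := by
      rw [Finset.prod_congr rfl fun i _ => hMab (σ i) (τ i), Finset.prod_univ_sum]
    rw [hR]
  have step2 : ∀ σ : Perm (Fin m),
      ∑ τ : Perm (Fin m), sgn τ * ∏ i, M (σ i) (τ i) = sgn σ * M.det := by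
    intro σ
    have reindex := Equiv.sum_comp (Equiv.mulRight σ)
      (fun τ : Perm (Fin m) => sgn τ * ∏ i, M (σ i) (τ i))
    rw [← reindex]
    have hterm : ∀ ρ : Perm (Fin m),
        sgn (Equiv.mulRight σ ρ) * ∏ i, M (σ i) ((Equiv.mulRight σ ρ) i)
        = sgn σ * (sgn ρ * ∏ j, M j (ρ j)) := by
      intro ρ
      have h1 : ∀ i, (Equiv.mulRight σ ρ) i = ρ (σ i) := fun i => rfl
      have h2 : sgn (Equiv.mulRight σ ρ) = sgn ρ * sgn σ := by
        simp only [hsgn, Equiv.coe_mulRight]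
        rw [Equiv.Perm.sign_mul]
        push_cast
        ring
      have h3 : ∏ i, M (σ i) (ρ (σ i)) = ∏ j, M j (ρ j) :=
        Equiv.prod_comp σ (fun j => M j (ρ j))
      simp only [h1, h2, h3]
      ring
    rw [Finset.sum_congr rfl fun ρ _ => hterm ρ, ← Finset.mul_sum]
    congr 1
    have hMt : M.det = Mᵀ.det := (Matrix.det_transpose M).symm
    rw [hMt, Matrix.det_apply']
    rfl
  have step3 : ∑ σ : Perm (Fin m), ∑ τ : Perm (Fin m), sgn σ * sgn τ * ∏ i, M (σ i) (τ i)
      = (m.factorial : ℝ) * M.det := by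
    have hss : ∀ σ : Perm (Fin m), ∑ τ : Perm (Fin m), sgn σ * sgn τ * ∏ i, M (σ i) (τ i)
        = M.det := by
      intro σ
      have hmm : ∑ τ : Perm (Fin m), sgn σ * sgn τ * ∏ i, M (σ i) (τ i)
          = sgn σ * ∑ τ : Perm (Fin m), sgn τ * ∏ i, M (σ i) (τ i) := by
        rw [Finset.mul_sum]
        exact Finset.sum_congr rfl fun τ _ => by ring
      rw [hmm, step2, ← mul_assoc]
      have hs1 : sgn σ * sgn σ = 1 := by
        simp only [hsgn]
        rw [← Int.cast_mul, ← Units.val_mul, Int.units_mul_self]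
        norm_num
      rw [hs1, one_mul]
    rw [Finset.sum_congr rfl fun σ _ => hss σ, Finset.sum_const, Finset.card_univ,
      Fintype.card_perm, Fintype.card_fin, nsmul_eq_mul]
  rw [step1, step3]

lemma leftLim_eq_self_of_continuous (ℓ : StieltjesFunction ℝ) (hc : Continuous ℓ) (u : ℝ) :
    Function.leftLim ℓ u = ℓ u :=
  leftLim_eq_of_tendsto (h := nhdsLT_neBot u)
    ((hc.tendsto u).mono_left nhdsWithin_le_nhds)

lemma stieltjes_band_measure_le (ℓ : StieltjesFunction ℝ) (hc : Continuous ℓ)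
    (βmin βmax a t : ℝ) :
    ℓ.measure {β ∈ Set.Icc βmin βmax | |ℓ β - a| ≤ t} ≤ ENNReal.ofReal (2 * t) := by
  set B := {β ∈ Set.Icc βmin βmax | |ℓ β - a| ≤ t} with hB
  rcases B.eq_empty_or_nonempty with h | hne
  · rw [h]; simp
  · have hclosed : IsClosed B := by
      have hBeq : B = Set.Icc βmin βmax ∩ (fun β => |ℓ β - a|) ⁻¹' Set.Iic t := by
        ext β; simp [hB, Set.mem_sep_iff]
      rw [hBeq]
      exact isClosed_Icc.inter (IsClosed.preimage (by fun_prop) isClosed_Iic)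
    have hcomp : IsCompact B :=
      isCompact_Icc.of_isClosed_subset hclosed (fun x hx => hx.1)
    set u := sInf B with hu
    set v := sSup B with hv
    have humem : u ∈ B := hcomp.sInf_mem hne
    have hvmem : v ∈ B := hcomp.sSup_mem hne
    have hsub : B ⊆ Set.Icc u v := fun x hx =>
      ⟨csInf_le hcomp.bddBelow hx, le_csSup hcomp.bddAbove hx⟩
    calc ℓ.measure B ≤ ℓ.measure (Set.Icc u v) := MeasureTheory.measure_mono hsub
    _ = ENNReal.ofReal (ℓ v - Function.leftLim ℓ u) := ℓ.measure_Icc u v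
    _ ≤ ENNReal.ofReal (2 * t) := by
        rw [leftLim_eq_self_of_continuous ℓ hc]
        apply ENNReal.ofReal_le_ofReal
        have h1 : |ℓ u - a| ≤ t := humem.2
        have h2 : |ℓ v - a| ≤ t := hvmem.2
        rw [abs_le] at h1 h2
        linarith [h1.1, h2.2]

lemma grid_cover {lam L : ℝ} (hlam : 0 < lam) (hL : 0 < L) {s : ℝ} (hs : 0 ≤ s)
    (hsL : s ≤ L) :
    ∃ i : ℕ, i < ⌈L / lam⌉₊ ∧ |s - i * lam| ≤ lam := by
  set M := ⌈L / lam⌉₊ with hM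
  have hMpos : 0 < M := Nat.ceil_pos.2 (div_pos hL hlam)
  have hMle : L / lam ≤ M := Nat.le_ceil _
  by_cases h : ⌊s / lam⌋₊ < M
  · refine ⟨⌊s / lam⌋₊, h, ?_⟩
    have h1 : (⌊s / lam⌋₊ : ℝ) ≤ s / lam := Nat.floor_le (div_nonneg hs hlam.le)
    have h2 : s / lam < ⌊s / lam⌋₊ + 1 := Nat.lt_floor_add_one _
    have h1' : (⌊s / lam⌋₊ : ℝ) * lam ≤ s := by
      have := mul_le_mul_of_nonneg_right h1 hlam.le
      rwa [div_mul_cancel₀ _ hlam.ne'] at this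
    have h2' : s < ((⌊s / lam⌋₊ : ℝ) + 1) * lam := by
      have := mul_lt_mul_of_pos_right h2 hlam
      rwa [div_mul_cancel₀ _ hlam.ne'] at this
    rw [abs_le]
    constructor <;> nlinarith
  · push_neg at h
    have h1 : (M : ℝ) ≤ (⌊s / lam⌋₊ : ℝ) := by exact_mod_cast h
    have h2 : (⌊s / lam⌋₊ : ℝ) ≤ s / lam := Nat.floor_le (div_nonneg hs hlam.le)
    refine ⟨M - 1, Nat.sub_lt hMpos one_pos, ?_⟩
    have hcast : ((M - 1 : ℕ) : ℝ) = (M : ℝ) - 1 := by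
      rw [Nat.cast_sub hMpos]; simp
    have hMlam : (M:ℝ) * lam ≤ s := by
      have := mul_le_mul_of_nonneg_right (h1.trans h2) hlam.le
      rwa [div_mul_cancel₀ _ hlam.ne'] at this
    have hsM : s ≤ (M:ℝ) * lam := by
      have := mul_le_mul_of_nonneg_right hMle hlam.le
      rw [div_mul_cancel₀ _ hlam.ne'] at this
      linarith
    rw [hcast, abs_le]
    constructor <;> nlinarith

lemma eventually_log_lt (a b c : ℝ) (ha : 0 < a) {γ : ℝ} (hγ : 0 < γ) :
    ∀ᶠ L : ℝ in Filter.atTop, b * Real.log L + c < a * L ^ γ := by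
  have h1 : (fun L : ℝ => b * Real.log L) =o[atTop] fun L : ℝ => L ^ γ :=
    (isLittleO_log_rpow_atTop hγ).const_mul_left b
  have h2 := h1.def (show (0:ℝ) < a/2 by linarith)
  have h3 : Tendsto (fun L : ℝ => (a/2) * L ^ γ) atTop atTop :=
    (tendsto_rpow_atTop hγ).const_mul_atTop (by linarith)
  have h4 := h3.eventually_gt_atTop c
  filter_upwards [h2, h4, eventually_ge_atTop (1:ℝ)] with L hL2 hL4 hL1
  have hpow : 0 ≤ L ^ γ := Real.rpow_nonneg (by linarith) γ
  have hlog : b * Real.log L ≤ (a/2) * L ^ γ := by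
    calc b * Real.log L ≤ ‖b * Real.log L‖ := Real.le_norm_self _
    _ ≤ (a/2) * ‖L ^ γ‖ := hL2
    _ = (a/2) * L ^ γ := by rw [Real.norm_of_nonneg hpow]
  have : (a/2) * L ^ γ + (a/2) * L ^ γ = a * L ^ γ := by ring
  linarith

end DOptAux

namespace DOptAux

variable {X : Type} {m : ℕ}

lemma design_w_nonneg (ξ : Design X) (x : X) : 0 ≤ ξ.w x := by
  by_cases h : x ∈ ξ.support
  · exact (ξ.w_pos x h).le
  · rw [ξ.w_zero x h]

lemma design_w_le_one (ξ : Design X) (x : X) : ξ.w x ≤ 1 := by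
  by_cases h : x ∈ ξ.support
  · calc ξ.w x ≤ ∑ y ∈ ξ.support, ξ.w y :=
        Finset.single_le_sum (fun y _ => design_w_nonneg ξ y) h
    _ = 1 := ξ.sum_one
  · rw [ξ.w_zero x h]; norm_num

lemma vecMulVec_posSemidef (v : Fin m → ℝ) : (vecMulVec v v).PosSemidef := by
  rw [posSemidef_iff_dotProduct_mulVec]
  constructor
  · ext i j; simp [vecMulVec_apply, mul_comm]
  · intro x
    have hq : dotProduct (star x) (vecMulVec v v *ᵥ x) = (v ⬝ᵥ x) ^ 2 := by
      simp only [star_trivial, dotProduct, mulVec, vecMulVec_apply, sq]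
      rw [Finset.sum_mul_sum]
      refine Finset.sum_congr rfl fun i _ => ?_
      rw [Finset.mul_sum]
      refine Finset.sum_congr rfl fun j _ => ?_
      ring
    rw [hq]
    positivity

lemma posSemidef_smul {A : Matrix (Fin m) (Fin m) ℝ} (hA : A.PosSemidef) {c : ℝ}
    (hc : 0 ≤ c) : (c • A).PosSemidef := by
  rw [posSemidef_iff_dotProduct_mulVec]
  constructor
  · unfold Matrix.IsHermitian
    rw [conjTranspose_smul, hA.1.eq, star_trivial]
  · intro x
    rw [smul_mulVec, dotProduct_smul, smul_eq_mul]
    exact mul_nonneg hc (hA.dotProduct_mulVec_nonneg x)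

lemma posSemidef_sum {ι : Type*} (s : Finset ι) (A : ι → Matrix (Fin m) (Fin m) ℝ)
    (h : ∀ i ∈ s, (A i).PosSemidef) : (∑ i ∈ s, A i).PosSemidef := by
  classical
  induction s using Finset.induction_on with
  | empty => simpa using Matrix.PosSemidef.zero
  | insert _ _ hnot ih =>
      rw [Finset.sum_insert hnot]
      exact (h _ (Finset.mem_insert_self _ _)).add
        (ih fun i hi => h i (Finset.mem_insert_of_mem hi))

lemma infoMat_posSemidef (f : X → ℝ → Fin m → ℝ) (ξ : Design X) (β : ℝ) :
    (infoMat f ξ β).PosSemidef := by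
  unfold infoMat
  classical
  exact posSemidef_sum _ _ fun x _ =>
    posSemidef_smul (vecMulVec_posSemidef _) (design_w_nonneg ξ x)

noncomputable def mixDesign [DecidableEq X] {M : ℕ} (hM : 0 < M) (ξ : Fin M → Design X) :
    Design X where
  support := Finset.univ.biUnion fun i => (ξ i).support
  w := fun x => (∑ i, (ξ i).w x) / M
  w_pos := by
    intro x hx
    rw [Finset.mem_biUnion] at hx
    obtain ⟨i, _, hi⟩ := hx
    apply div_pos _ (by exact_mod_cast hM)
    exact Finset.sum_pos' (fun j _ => design_w_nonneg (ξ j) x)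
      ⟨i, Finset.mem_univ i, (ξ i).w_pos x hi⟩
  w_zero := by
    intro x hx
    rw [Finset.mem_biUnion] at hx
    push_neg at hx
    have hz : ∀ i : Fin M, (ξ i).w x = 0 := fun i => (ξ i).w_zero x (hx i (Finset.mem_univ i))
    simp [hz]
  sum_one := by
    have key : ∀ i : Fin M,
        ∑ x ∈ Finset.univ.biUnion (fun j => (ξ j).support), (ξ i).w x = 1 := by
      intro i
      rw [← (ξ i).sum_one]
      symm
      apply Finset.sum_subset
      · intro x hx
        exact Finset.mem_biUnion.2 ⟨i, Finset.mem_univ i, hx⟩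
      · intro x _ hx
        exact (ξ i).w_zero x hx
    rw [← Finset.sum_div, Finset.sum_comm]
    rw [Finset.sum_congr rfl fun i _ => key i]
    simp
    omega

lemma infoMat_mixDesign [DecidableEq X] {M : ℕ} (hM : 0 < M) (ξ : Fin M → Design X)
    (f : X → ℝ → Fin m → ℝ) (β : ℝ) :
    infoMat f (mixDesign hM ξ) β = ((M : ℝ))⁻¹ • ∑ i, infoMat f (ξ i) β := by
  unfold infoMat mixDesign
  simp only [Finset.smul_sum]
  have hterm : ∀ x : X, ((∑ i, (ξ i).w x) / (M:ℝ)) • vecMulVec (f x β) (f x β)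
      = ∑ i : Fin M, (M:ℝ)⁻¹ • ((ξ i).w x • vecMulVec (f x β) (f x β)) := by
    intro x
    rw [div_eq_inv_mul, mul_smul, Finset.sum_smul, Finset.smul_sum]
  rw [Finset.sum_congr rfl fun x _ => hterm x, Finset.sum_comm]
  refine Finset.sum_congr rfl fun i _ => ?_
  symm
  apply Finset.sum_subset
  · intro x hx
    exact Finset.mem_biUnion.2 ⟨i, Finset.mem_univ i, hx⟩
  · intro x _ hx
    rw [(ξ i).w_zero x hx, zero_smul, smul_zero]

lemma negLog_of_pos {r : ℝ} (hr : 0 < r) : negLog r = ENNReal.ofReal (-Real.log r) :=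
  if_neg (not_le.2 hr)

lemma negLog_anti {r s : ℝ} (hs : 0 < s) (h : r ≤ s) : negLog s ≤ negLog r := by
  unfold negLog
  rw [if_neg (not_le.2 hs)]
  by_cases hr : r ≤ 0
  · rw [if_pos hr]; exact le_top
  · rw [if_neg hr]
    apply ENNReal.ofReal_le_ofReal
    have := Real.log_le_log (not_le.1 hr) h
    linarith

end DOptAux

set_option maxHeartbeats 2000000 in
/-- For every `m ≥ 1`, `N`, and constants `c₀, c₁, c₃, λ, γ > 0`, there is `B₀ > 0` such
that for every design problem satisfying (2.9), (2.5), the exponential decay condition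
`Q(β,β̃) ≤ c₁ exp(−|ℓ(β) − ℓ(β̃)|^γ)`, and every prior `π` with
`π(S) ≥ c₃ μ_ℓ(S)/μ_ℓ(ℬ)`, if `μ_ℓ(ℬ) = ℓ(β_max) − ℓ(β_min) ≥ B₀` then any Bayesian
`D`-optimal design has more than `N` support points. -/
theorem bayesian_support_points_unbounded
    (m : ℕ) (hm : 1 ≤ m) (N : ℕ) (c₀ c₁ c₃ lam γ : ℝ)
    (hc₀ : 0 < c₀) (hc₁ : 0 < c₁) (hc₃ : 0 < c₃) (hlam : 0 < lam) (hγ : 0 < γ) :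
    ∃ B₀ : ℝ, 0 < B₀ ∧
      ∀ (X : Type) [Nonempty X] (βmin βmax : ℝ), βmin < βmax →
        ∀ (f : X → ℝ → Fin m → ℝ) (ℓ : StieltjesFunction ℝ) (ξopt : ℝ → Design X)
          (π : MeasureTheory.Measure ℝ) [MeasureTheory.IsProbabilityMeasure π],
          -- ℓ is a (nondecreasing, by definition of a Stieltjes function) continuous scale
          Continuous ℓ →
          -- measurability of the criterion (guaranteed in the context by continuity of f)
          (∀ x : X, Continuous (f x)) →
          Measurable (fun β : ℝ => (infoMat f (ξopt β) β).det) →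
          -- π is a Borel probability measure on ℬ
          π (Set.Icc βmin βmax) = 1 →
          -- local D-optimality of the designs ξ[β], with nonsingular information matrix
          (∀ β ∈ Set.Icc βmin βmax, 0 < (infoMat f (ξopt β) β).det) →
          (∀ β ∈ Set.Icc βmin βmax, ∀ ξ : Design X,
              (infoMat f ξ β).det ≤ (infoMat f (ξopt β) β).det) →
          -- exponential decay condition (4.2):  Q(β,β̃) ≤ c₁ exp(−|ℓ(β) − ℓ(β̃)|^γ)
          (∀ β ∈ Set.Icc βmin βmax, ∀ b ∈ Set.Icc βmin βmax,
              (infoMat f (ξopt b) β).det / (infoMat f (ξopt β) β).det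
                ≤ c₁ * Real.exp (-(|ℓ β - ℓ b| ^ γ))) →
          -- condition (2.5):  Q(β,β̃) ≥ 1/2 whenever |ℓ(β) − ℓ(β̃)| ≤ λ
          (∀ β ∈ Set.Icc βmin βmax, ∀ b ∈ Set.Icc βmin βmax,
              |ℓ β - ℓ b| ≤ lam →
              (1 : ℝ) / 2 ≤ (infoMat f (ξopt b) β).det / (infoMat f (ξopt β) β).det) →
          -- condition (2.9)
          (∀ xs : Fin m → X, ∃ b : Fin m → ℝ,
              (∀ j, b j ∈ Set.Icc βmin βmax) ∧
              ∀ β ∈ Set.Icc βmin βmax,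
                detIm f xs β ≤ c₀ * ∑ j, (infoMat f (ξopt (b j)) β).det) →
          -- condition (4.3):  π(S) ≥ c₃ μ_ℓ(S)/μ_ℓ(ℬ) for all Borel S ⊆ ℬ
          (∀ S : Set ℝ, S ⊆ Set.Icc βmin βmax → MeasurableSet S →
              ENNReal.ofReal c₃ * ℓ.measure S
                ≤ ENNReal.ofReal (ℓ βmax - ℓ βmin) * π S) →
          -- μ_ℓ(ℬ) = ℓ(β_max) − ℓ(β_min) sufficiently large
          B₀ ≤ ℓ βmax - ℓ βmin →
          -- any maximizer of Ψ_st(ξ) = ∫ log(det M(ξ,β)/det M(ξ[β],β)) dπ, i.e. any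
          -- minimizer of the corresponding (possibly infinite) nonnegative loss integral
          ∀ ξstar : Design X,
            (∀ ξ : Design X,
              (∫⁻ β in Set.Icc βmin βmax,
                  negLog ((infoMat f ξstar β).det / (infoMat f (ξopt β) β).det) ∂π) ≤
              (∫⁻ β in Set.Icc βmin βmax,
                  negLog ((infoMat f ξ β).det / (infoMat f (ξopt β) β).det) ∂π)) →
            N < ξstar.support.card := by
  classical
  set K₀ : ℕ := m * (N + 1) ^ m with hK₀def
  have hK₀pos : 0 < K₀ := Nat.mul_pos hm (pow_pos (Nat.succ_pos N) m)
  have hK₀r : (0:ℝ) < (K₀:ℝ) := by exact_mod_cast hK₀pos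
  set Dc : ℝ := Real.log (c₀ * c₁ * K₀) with hDcdef
  set a : ℝ := (c₃ / 2) * ((4 * (K₀:ℝ)) ^ γ)⁻¹ with hadef
  have hapos : 0 < a := by
    apply mul_pos (by linarith)
    exact inv_pos.2 (Real.rpow_pos_of_pos (by linarith) γ)
  have hev := DOptAux.eventually_log_lt a m
      (Real.log 2 + m * Real.log (2 / lam) + (c₃ / 2) * Dc) hapos hγ
  obtain ⟨B₁, hB₁⟩ := Filter.eventually_atTop.1
    (hev.and (Filter.eventually_ge_atTop (max lam 1)))
  refine ⟨max B₁ (max lam 1),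
    lt_of_lt_of_le one_pos ((le_max_right lam 1).trans (le_max_right B₁ (max lam 1))), ?_⟩
  intro X _instX βmin βmax hββ f ℓ ξopt π _instπ hℓcont hfcont hdetmeas hπIcc hdetpos
    hlocopt h42 h25 h29 h43 hB₀L ξstar hmin
  by_contra hNcard
  push_neg at hNcard
  set L : ℝ := ℓ βmax - ℓ βmin with hLdef
  have hLB₁ : B₁ ≤ L := le_trans (le_max_left _ _) hB₀L
  obtain ⟨hkey, hLmax⟩ := hB₁ L hLB₁
  have hLlam : lam ≤ L := le_trans (le_max_left _ _) hLmax
  have hL1 : (1:ℝ) ≤ L := le_trans (le_max_right _ _) hLmax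
  have hLpos : 0 < L := lt_of_lt_of_le one_pos hL1
  -- ================= Part 1 : competitor design =================
  set Mn : ℕ := ⌈L / lam⌉₊ with hMndef
  have hMnpos : 0 < Mn := Nat.ceil_pos.2 (div_pos hLpos hlam)
  have hMnr : (0:ℝ) < (Mn:ℝ) := by exact_mod_cast hMnpos
  have hgrid : ∀ i : Fin Mn, ∃ b, b ∈ Set.Icc βmin βmax ∧ ℓ b = ℓ βmin + (i:ℝ) * lam := by
    intro i
    have h1 : ((i : ℕ) : ℝ) < L / lam := Nat.lt_ceil.1 i.isLt
    have h1' : (i:ℝ) * lam < L := by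
      have h2 := mul_lt_mul_of_pos_right h1 hlam
      rwa [div_mul_cancel₀ _ hlam.ne'] at h2
    have h2 : ℓ βmin + (i:ℝ) * lam ∈ Set.Icc (ℓ βmin) (ℓ βmax) := by
      constructor
      · have h3 : 0 ≤ (i:ℝ) * lam := mul_nonneg (Nat.cast_nonneg _) hlam.le
        linarith
      · rw [hLdef] at h1'; linarith
    obtain ⟨b, hb1, hb2⟩ := intermediate_value_Icc hββ.le hℓcont.continuousOn h2
    exact ⟨b, hb1, hb2⟩
  choose gβ hgβmem hgβval using hgrid
  set ξmix := DOptAux.mixDesign hMnpos (fun i => ξopt (gβ i)) with hximix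
  have hmix_lb : ∀ β ∈ Set.Icc βmin βmax,
      (1/2) * ((Mn:ℝ)⁻¹) ^ m * (infoMat f (ξopt β) β).det
        ≤ (infoMat f ξmix β).det := by
    intro β hβ
    have hs0 : 0 ≤ ℓ β - ℓ βmin := sub_nonneg.2 (ℓ.mono hβ.1)
    have hsL : ℓ β - ℓ βmin ≤ L := by
      have h4 := ℓ.mono hβ.2
      rw [hLdef]; linarith
    obtain ⟨i, hiM, hicov⟩ := DOptAux.grid_cover hlam hLpos hs0 hsL
    set i' : Fin Mn := ⟨i, hiM⟩ with hi'
    have hcov : |ℓ β - ℓ (gβ i')| ≤ lam := by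
      rw [hgβval i']
      have h5 : ℓ β - (ℓ βmin + ((i' : ℕ) : ℝ) * lam) = (ℓ β - ℓ βmin) - (i:ℝ) * lam := by
        simp only [hi']; ring
      rw [h5]
      exact hicov
    have h25b := h25 β hβ (gβ i') (hgβmem i') hcov
    have hoptpos := hdetpos β hβ
    have hhalf : (1/2) * (infoMat f (ξopt β) β).det
        ≤ (infoMat f (ξopt (gβ i')) β).det := by
      rw [le_div_iff₀ hoptpos] at h25b
      linarith
    have hsum_lb : (infoMat f (ξopt (gβ i')) β).det
        ≤ (∑ i, infoMat f (ξopt (gβ i)) β).det := by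
      have hsplit : ∑ i, infoMat f (ξopt (gβ i)) β
          = infoMat f (ξopt (gβ i')) β
            + ∑ i ∈ Finset.univ.erase i', infoMat f (ξopt (gβ i)) β :=
        (Finset.add_sum_erase _ _ (Finset.mem_univ i')).symm
      rw [hsplit]
      exact DOptAux.det_le_det_add_posSemidef (DOptAux.infoMat_posSemidef f _ β)
        (DOptAux.posSemidef_sum _ _ fun j _ => DOptAux.infoMat_posSemidef f _ β)
    have hdetmix : (infoMat f ξmix β).det
        = ((Mn:ℝ)⁻¹) ^ m * (∑ i, infoMat f (ξopt (gβ i)) β).det := by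
      rw [hximix, DOptAux.infoMat_mixDesign, Matrix.det_smul, Fintype.card_fin]
    rw [hdetmix]
    have hpow : (0:ℝ) ≤ ((Mn:ℝ)⁻¹) ^ m := by positivity
    nlinarith [hhalf.trans hsum_lb]
  set UB : ℝ := Real.log 2 + m * Real.log Mn with hUBdef
  have hMn1 : (1:ℝ) ≤ (Mn:ℝ) := by exact_mod_cast hMnpos
  have hUBnn : 0 ≤ UB := by
    have h1 := Real.log_nonneg hMn1
    have h2 := Real.log_nonneg (by norm_num : (1:ℝ) ≤ 2)
    have h3 : 0 ≤ (m:ℝ) * Real.log Mn := mul_nonneg (Nat.cast_nonneg _) h1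
    rw [hUBdef]; linarith
  set rlo : ℝ := (1/2) * ((Mn:ℝ)⁻¹) ^ m with hrlodef
  have hrlopos : 0 < rlo := by rw [hrlodef]; positivity
  have hrloUB : -Real.log rlo = UB := by
    rw [hrlodef, Real.log_mul (by norm_num) (by positivity), Real.log_pow, Real.log_inv,
      hUBdef, one_div, Real.log_inv]
    ring
  have hIstar_le : (∫⁻ β in Set.Icc βmin βmax,
      negLog ((infoMat f ξstar β).det / (infoMat f (ξopt β) β).det) ∂π)
      ≤ ENNReal.ofReal UB := by
    refine le_trans (hmin ξmix) ?_
    have hbound : ∀ β ∈ Set.Icc βmin βmax,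
        negLog ((infoMat f ξmix β).det / (infoMat f (ξopt β) β).det)
          ≤ ENNReal.ofReal UB := by
      intro β hβ
      have hoptpos := hdetpos β hβ
      have hr : rlo ≤ (infoMat f ξmix β).det / (infoMat f (ξopt β) β).det := by
        rw [le_div_iff₀ hoptpos, hrlodef]
        exact hmix_lb β hβ
      calc negLog ((infoMat f ξmix β).det / (infoMat f (ξopt β) β).det)
          ≤ negLog rlo := DOptAux.negLog_anti (lt_of_lt_of_le hrlopos hr) hr
      _ = ENNReal.ofReal UB := by rw [DOptAux.negLog_of_pos hrlopos, hrloUB]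
    calc (∫⁻ β in Set.Icc βmin βmax,
        negLog ((infoMat f ξmix β).det / (infoMat f (ξopt β) β).det) ∂π)
        ≤ ∫⁻ _β in Set.Icc βmin βmax, ENNReal.ofReal UB ∂π :=
          MeasureTheory.setLIntegral_mono' measurableSet_Icc hbound
    _ = ENNReal.ofReal UB := by
        rw [MeasureTheory.setLIntegral_const, hπIcc, mul_one]
  -- ================= Part 2 : lower bound =================
  choose bfun hbfun using h29
  set Φ := Fintype.piFinset (fun _ : Fin m => ξstar.support) with hΦdef
  have hΦcard : Φ.card * m ≤ K₀ := by
    have h1 : Φ.card = ξstar.support.card ^ m := by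
      rw [hΦdef, Fintype.card_piFinset]
      simp [Finset.prod_const]
    rw [h1, hK₀def, mul_comm]
    exact Nat.mul_le_mul_left m (Nat.pow_le_pow_left (hNcard.trans (Nat.le_succ N)) m)
  have hstar_pt : ∀ β ∈ Set.Icc βmin βmax,
      (infoMat f ξstar β).det
        ≤ c₀ * ∑ φ ∈ Φ, ∑ j, (infoMat f (ξopt (bfun φ j)) β).det := by
    intro β hβ
    have hCB := DOptAux.det_sum_vecMulVec_eq ξstar.support ξstar.w (fun x => f x β)
    have hterm : ∀ φ ∈ Φ,
        (∏ j, ξstar.w (φ j)) * (Matrix.det (Matrix.of fun i j => f (φ j) β i)) ^ 2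
        ≤ c₀ * ∑ j, (infoMat f (ξopt (bfun φ j)) β).det := by
      intro φ _
      have h1 : (∏ j, ξstar.w (φ j)) ≤ 1 :=
        Finset.prod_le_one (fun j _ => DOptAux.design_w_nonneg _ _)
          (fun j _ => DOptAux.design_w_le_one _ _)
      have hIm : (Matrix.det (Matrix.of fun i j => f (φ j) β i)) ^ 2 = detIm f φ β := rfl
      have h2 := (hbfun φ).2 β hβ
      calc (∏ j, ξstar.w (φ j)) * (Matrix.det (Matrix.of fun i j => f (φ j) β i)) ^ 2
          ≤ 1 * (Matrix.det (Matrix.of fun i j => f (φ j) β i)) ^ 2 :=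
            mul_le_mul_of_nonneg_right h1 (sq_nonneg _)
      _ = detIm f φ β := by rw [one_mul, hIm]
      _ ≤ c₀ * ∑ j, (infoMat f (ξopt (bfun φ j)) β).det := h2
    have hfac1 : (1:ℝ) ≤ (m.factorial : ℝ) := by
      exact_mod_cast Nat.one_le_iff_ne_zero.2 (Nat.factorial_ne_zero m)
    have hdet_nonneg : 0 ≤ (infoMat f ξstar β).det :=
      DOptAux.det_nonneg_of_posSemidef (DOptAux.infoMat_posSemidef f ξstar β)
    calc (infoMat f ξstar β).det ≤ (m.factorial : ℝ) * (infoMat f ξstar β).det :=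
          le_mul_of_one_le_left hdet_nonneg hfac1
    _ = ∑ φ ∈ Φ, (∏ j, ξstar.w (φ j))
          * (Matrix.det (Matrix.of fun i j => f (φ j) β i)) ^ 2 := hCB
    _ ≤ ∑ φ ∈ Φ, c₀ * ∑ j, (infoMat f (ξopt (bfun φ j)) β).det := Finset.sum_le_sum hterm
    _ = c₀ * ∑ φ ∈ Φ, ∑ j, (infoMat f (ξopt (bfun φ j)) β).det := by rw [Finset.mul_sum]
  set t : ℝ := L / (4 * K₀) with htdef
  have htpos : 0 < t := div_pos hLpos (by positivity)
  set S : Set ℝ := Set.Icc βmin βmax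
      ∩ ⋂ φ ∈ Φ, ⋂ j : Fin m, {β : ℝ | t ≤ |ℓ β - ℓ (bfun φ j)|} with hSdef
  have hSsub : S ⊆ Set.Icc βmin βmax := Set.inter_subset_left
  have hSmeas : MeasurableSet S := by
    apply measurableSet_Icc.inter
    apply MeasurableSet.biInter (Φ : Finset _).countable_toSet
    intro φ _
    apply MeasurableSet.iInter
    intro j
    exact measurableSet_le measurable_const
      ((hℓcont.sub continuous_const).abs.measurable)
  have hμIcc : ℓ.measure (Set.Icc βmin βmax) = ENNReal.ofReal L := by
    rw [ℓ.measure_Icc, DOptAux.leftLim_eq_self_of_continuous ℓ hℓcont]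
  have hcover : Set.Icc βmin βmax ⊆
      S ∪ ⋃ φ ∈ Φ, ⋃ j : Fin m,
        {β ∈ Set.Icc βmin βmax | |ℓ β - ℓ (bfun φ j)| ≤ t} := by
    intro β hβ
    by_cases hS : β ∈ S
    · exact Or.inl hS
    · right
      rw [hSdef] at hS
      simp only [Set.mem_inter_iff, Set.mem_iInter, Set.mem_setOf_eq, not_and,
        not_forall] at hS
      obtain ⟨φ, hφ, j, hj⟩ := hS hβ
      refine Set.mem_biUnion hφ ?_
      exact Set.mem_iUnion.2 ⟨j, ⟨hβ, (not_le.1 hj).le⟩⟩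
  have hμS : ENNReal.ofReal (L/2) ≤ ℓ.measure S := by
    have hμU : ℓ.measure (⋃ φ ∈ Φ, ⋃ j : Fin m,
        {β ∈ Set.Icc βmin βmax | |ℓ β - ℓ (bfun φ j)| ≤ t}) ≤ ENNReal.ofReal (L/2) := by
      calc ℓ.measure (⋃ φ ∈ Φ, ⋃ j : Fin m,
          {β ∈ Set.Icc βmin βmax | |ℓ β - ℓ (bfun φ j)| ≤ t})
          ≤ ∑ φ ∈ Φ, ℓ.measure (⋃ j : Fin m,
              {β ∈ Set.Icc βmin βmax | |ℓ β - ℓ (bfun φ j)| ≤ t}) :=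
            MeasureTheory.measure_biUnion_finset_le Φ _
      _ ≤ ∑ φ ∈ Φ, ∑ j : Fin m, ℓ.measure
            {β ∈ Set.Icc βmin βmax | |ℓ β - ℓ (bfun φ j)| ≤ t} := by
            exact Finset.sum_le_sum fun φ _ => MeasureTheory.measure_iUnion_fintype_le _ _
      _ ≤ ∑ φ ∈ Φ, ∑ _j : Fin m, ENNReal.ofReal (2 * t) := by
            refine Finset.sum_le_sum fun φ _ => Finset.sum_le_sum fun j _ => ?_
            exact DOptAux.stieltjes_band_measure_le ℓ hℓcont βmin βmax _ t
      _ = (Φ.card * m : ℕ) * ENNReal.ofReal (2 * t) := by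
            rw [Finset.sum_const, Finset.sum_const, Finset.card_univ, Fintype.card_fin]
            rw [nsmul_eq_mul, nsmul_eq_mul, ← mul_assoc]
            norm_cast
      _ ≤ (K₀ : ℕ) * ENNReal.ofReal (2 * t) := by
            apply mul_le_mul_left
            exact_mod_cast hΦcard
      _ = ENNReal.ofReal (L/2) := by
            rw [← ENNReal.ofReal_natCast, ← ENNReal.ofReal_mul (Nat.cast_nonneg K₀)]
            congr 1
            rw [htdef]
            field_simp
            ring
    have h1 : ENNReal.ofReal (L/2) + ENNReal.ofReal (L/2) ≤ ℓ.measure S + ENNReal.ofReal (L/2) := by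
      calc ENNReal.ofReal (L/2) + ENNReal.ofReal (L/2) = ENNReal.ofReal L := by
            rw [← ENNReal.ofReal_add (by linarith) (by linarith)]
            norm_num
      _ = ℓ.measure (Set.Icc βmin βmax) := hμIcc.symm
      _ ≤ ℓ.measure (S ∪ ⋃ φ ∈ Φ, ⋃ j : Fin m,
            {β ∈ Set.Icc βmin βmax | |ℓ β - ℓ (bfun φ j)| ≤ t}) :=
            MeasureTheory.measure_mono hcover
      _ ≤ ℓ.measure S + ℓ.measure (⋃ φ ∈ Φ, ⋃ j : Fin m,
            {β ∈ Set.Icc βmin βmax | |ℓ β - ℓ (bfun φ j)| ≤ t}) :=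
            MeasureTheory.measure_union_le _ _
      _ ≤ ℓ.measure S + ENNReal.ofReal (L/2) := add_le_add_right hμU _
    exact (ENNReal.add_le_add_iff_right ENNReal.ofReal_ne_top).1 h1
  have hπS : ENNReal.ofReal (c₃/2) ≤ π S := by
    have h43S := h43 S hSsub hSmeas
    have hc3L : ENNReal.ofReal L * ENNReal.ofReal (c₃/2) ≤ ENNReal.ofReal L * π S := by
      calc ENNReal.ofReal L * ENNReal.ofReal (c₃/2)
          = ENNReal.ofReal (L * (c₃/2)) := (ENNReal.ofReal_mul hLpos.le).symm
      _ = ENNReal.ofReal (c₃ * (L/2)) := by rw [show L * (c₃/2) = c₃ * (L/2) from by ring]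
      _ = ENNReal.ofReal c₃ * ENNReal.ofReal (L/2) := ENNReal.ofReal_mul hc₃.le
      _ ≤ ENNReal.ofReal c₃ * ℓ.measure S := mul_le_mul_right hμS _
      _ ≤ ENNReal.ofReal L * π S := h43S
    exact (ENNReal.mul_le_mul_iff_right (ENNReal.ofReal_pos.2 hLpos).ne' ENNReal.ofReal_ne_top).1 hc3L
  set ρ : ℝ := c₀ * c₁ * K₀ * Real.exp (-(t ^ γ)) with hρdef
  have hρpos : 0 < ρ := by rw [hρdef]; positivity
  have hρlog : -Real.log ρ = t ^ γ - Dc := by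
    rw [hρdef, Real.log_mul (by positivity) (Real.exp_ne_zero _), Real.log_exp, hDcdef]
    ring
  have hpt : ∀ β ∈ S, ENNReal.ofReal (t ^ γ - Dc)
      ≤ negLog ((infoMat f ξstar β).det / (infoMat f (ξopt β) β).det) := by
    intro β hβS
    have hβ : β ∈ Set.Icc βmin βmax := hSsub hβS
    have hoptpos := hdetpos β hβ
    have hfar : ∀ φ ∈ Φ, ∀ j : Fin m, t ≤ |ℓ β - ℓ (bfun φ j)| := by
      rw [hSdef] at hβS
      intro φ hφ j
      have h6 := hβS.2
      rw [Set.mem_iInter₂] at h6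
      have h7 := h6 φ hφ
      rw [Set.mem_iInter] at h7
      exact h7 j
    have hratR : (infoMat f ξstar β).det / (infoMat f (ξopt β) β).det ≤ ρ := by
      have h1 := hstar_pt β hβ
      have h2 : ∀ φ ∈ Φ, ∀ j : Fin m,
          (infoMat f (ξopt (bfun φ j)) β).det
            ≤ c₁ * Real.exp (-(t ^ γ)) * (infoMat f (ξopt β) β).det := by
        intro φ hφ j
        have h42b := h42 β hβ (bfun φ j) ((hbfun φ).1 j)
        have habs := hfar φ hφ j
        have hmono : t ^ γ ≤ |ℓ β - ℓ (bfun φ j)| ^ γ :=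
          Real.rpow_le_rpow htpos.le habs hγ.le
        have hexp := Real.exp_le_exp.2 (neg_le_neg hmono)
        have h3 : (infoMat f (ξopt (bfun φ j)) β).det / (infoMat f (ξopt β) β).det
            ≤ c₁ * Real.exp (-(t ^ γ)) :=
          h42b.trans (mul_le_mul_of_nonneg_left hexp hc₁.le)
        rw [div_le_iff₀ hoptpos] at h3
        exact h3
      rw [div_le_iff₀ hoptpos]
      have hsum : ∑ φ ∈ Φ, ∑ j : Fin m, (infoMat f (ξopt (bfun φ j)) β).det
          ≤ (Φ.card * m : ℕ) * (c₁ * Real.exp (-(t ^ γ)) * (infoMat f (ξopt β) β).det) := by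
        calc ∑ φ ∈ Φ, ∑ j : Fin m, (infoMat f (ξopt (bfun φ j)) β).det
            ≤ ∑ φ ∈ Φ, ∑ _j : Fin m,
                (c₁ * Real.exp (-(t ^ γ)) * (infoMat f (ξopt β) β).det) :=
              Finset.sum_le_sum fun φ hφ => Finset.sum_le_sum fun j _ => h2 φ hφ j
        _ = (Φ.card * m : ℕ) * (c₁ * Real.exp (-(t ^ γ)) * (infoMat f (ξopt β) β).det) := by
              rw [Finset.sum_const, Finset.sum_const, Finset.card_univ, Fintype.card_fin,
                nsmul_eq_mul, nsmul_eq_mul, ← mul_assoc]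
              norm_cast
      have hcm : ((Φ.card * m : ℕ) : ℝ) ≤ (K₀ : ℝ) := by exact_mod_cast hΦcard
      have hEd : 0 ≤ c₁ * Real.exp (-(t ^ γ)) * (infoMat f (ξopt β) β).det := by positivity
      calc (infoMat f ξstar β).det
          ≤ c₀ * ∑ φ ∈ Φ, ∑ j, (infoMat f (ξopt (bfun φ j)) β).det := h1
      _ ≤ c₀ * ((Φ.card * m : ℕ) * (c₁ * Real.exp (-(t ^ γ)) * (infoMat f (ξopt β) β).det)) :=
            mul_le_mul_of_nonneg_left hsum hc₀.le
      _ ≤ c₀ * ((K₀ : ℝ) * (c₁ * Real.exp (-(t ^ γ)) * (infoMat f (ξopt β) β).det)) := by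
            apply mul_le_mul_of_nonneg_left _ hc₀.le
            exact mul_le_mul_of_nonneg_right hcm hEd
      _ = ρ * (infoMat f (ξopt β) β).det := by rw [hρdef]; ring
    calc ENNReal.ofReal (t ^ γ - Dc) = negLog ρ := by
          rw [DOptAux.negLog_of_pos hρpos, hρlog]
    _ ≤ negLog ((infoMat f ξstar β).det / (infoMat f (ξopt β) β).det) :=
          DOptAux.negLog_anti hρpos hratR
  have hIstar_ge : ENNReal.ofReal (t ^ γ - Dc) * ENNReal.ofReal (c₃/2)
      ≤ ∫⁻ β in Set.Icc βmin βmax,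
          negLog ((infoMat f ξstar β).det / (infoMat f (ξopt β) β).det) ∂π := by
    calc ENNReal.ofReal (t ^ γ - Dc) * ENNReal.ofReal (c₃/2)
        ≤ ENNReal.ofReal (t ^ γ - Dc) * π S := mul_le_mul_right hπS _
    _ = ∫⁻ _β in S, ENNReal.ofReal (t ^ γ - Dc) ∂π :=
        (MeasureTheory.setLIntegral_const S _).symm
    _ ≤ ∫⁻ β in S,
          negLog ((infoMat f ξstar β).det / (infoMat f (ξopt β) β).det) ∂π :=
        MeasureTheory.setLIntegral_mono' hSmeas hpt
    _ ≤ ∫⁻ β in Set.Icc βmin βmax,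
          negLog ((infoMat f ξstar β).det / (infoMat f (ξopt β) β).det) ∂π :=
        MeasureTheory.lintegral_mono_set hSsub
  -- ================= contradiction =================
  have hfinal : UB < (c₃/2) * (t ^ γ - Dc) := by
    have htγ : t ^ γ = L ^ γ * ((4 * (K₀:ℝ)) ^ γ)⁻¹ := by
      rw [htdef, Real.div_rpow hLpos.le (by positivity), div_eq_mul_inv]
    have hMle : (Mn:ℝ) ≤ 2 * L / lam := by
      have h1 : (Mn:ℝ) < L / lam + 1 := by
        have h2 := Nat.ceil_lt_add_one (le_of_lt (div_pos hLpos hlam))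
        exact_mod_cast h2
      have h2 : (1:ℝ) ≤ L / lam := (one_le_div hlam).2 hLlam
      have h3 : L / lam + 1 ≤ 2 * L / lam := by
        rw [show 2 * L / lam = L / lam + L / lam from by ring]
        linarith
      linarith
    have hlogM : Real.log Mn ≤ Real.log L + Real.log (2 / lam) := by
      calc Real.log Mn ≤ Real.log (2 * L / lam) := Real.log_le_log hMnr hMle
      _ = Real.log (L * (2 / lam)) := by rw [show 2 * L / lam = L * (2 / lam) from by ring]
      _ = Real.log L + Real.log (2 / lam) := Real.log_mul hLpos.ne' (by positivity)
    have hexp : (c₃/2) * (t ^ γ - Dc) = a * L ^ γ - (c₃/2) * Dc := by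
      rw [htγ, hadef]; ring
    have hm0 : (0:ℝ) ≤ (m:ℝ) := Nat.cast_nonneg m
    have hmlog : (m:ℝ) * Real.log Mn ≤ (m:ℝ) * (Real.log L + Real.log (2 / lam)) :=
      mul_le_mul_of_nonneg_left hlogM hm0
    rw [hUBdef, hexp]
    have hkey' : (m:ℝ) * Real.log L
        + (Real.log 2 + (m:ℝ) * Real.log (2 / lam) + (c₃/2) * Dc) < a * L ^ γ := hkey
    linarith
  have hcontr : ENNReal.ofReal ((c₃/2) * (t ^ γ - Dc)) ≤ ENNReal.ofReal UB := by
    calc ENNReal.ofReal ((c₃/2) * (t ^ γ - Dc))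
        = ENNReal.ofReal (t ^ γ - Dc) * ENNReal.ofReal (c₃/2) := by
          rw [ENNReal.ofReal_mul (by linarith : (0:ℝ) ≤ c₃/2), mul_comm]
    _ ≤ _ := le_trans hIstar_ge hIstar_le
  have hlt : ENNReal.ofReal UB < ENNReal.ofReal ((c₃/2) * (t ^ γ - Dc)) :=
    (ENNReal.ofReal_lt_ofReal_iff_of_nonneg hUBnn).2 hfinal
  exact (lt_irrefl _ (lt_of_lt_of_le hlt hcontr)).elim
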